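/- ℙ¹-almost surely, for every x ∈ 𝒳 ∩ [0,∞) with 𝒯^R_x < ∞, at the first time the greedy walk on ω⁺ hits the point x + L(x), no marks remain in the interval [x, x + L(x)): the walk has cleared x, has crossed every part of [x, x + ℓ(x)) at least twice, and has removed any mark left at x + ℓ(x) before hitting x + L(x). -/

import Mathlib

open scoped ENNReal

noncomputable section

/-- The number of points of a configuration `Xs ⊆ ℝ` lying in a window `A`. -/
def ptCount (Xs : Set ℝ) (A : Set ℝ) : ℕ := (Xs ∩ A).ncard

/-- `N` is a Poisson point process of intensity `c` (with respect to Lebesgue measure)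
under the probability measure `P`: configurations are a.s. locally finite, the number of
points in any finite-volume measurable window is Poisson distributed with mean
`c * volume A`, and the counts in pairwise disjoint windows are independent. -/
def IsPoissonPP {Ω : Type} [MeasurableSpace Ω] (P : MeasureTheory.Measure Ω)
    (N : Ω → Set ℝ) (c : ℝ) : Prop :=
  (∀ᵐ ωs ∂P, ∀ r : ℝ, (N ωs ∩ Set.Icc (-r) r).Finite) ∧
  (∀ A : Set ℝ, MeasurableSet A → Measurable fun ωs => ptCount (N ωs) A) ∧
  (∀ A : Set ℝ, MeasurableSet A → MeasureTheory.volume A ≠ ⊤ → ∀ n : ℕ,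
      P {ωs | ptCount (N ωs) A = n} =
        ENNReal.ofReal (Real.exp (-(c * (MeasureTheory.volume A).toReal)) *
          (c * (MeasureTheory.volume A).toReal) ^ n / n.factorial)) ∧
  (∀ (m : ℕ) (A : Fin m → Set ℝ), (∀ i, MeasurableSet (A i)) →
      Pairwise (Function.onFun Disjoint A) →
      ProbabilityTheory.iIndepFun
        (fun i ωs => ptCount (N ωs) (A i)) P)

/-- `(X, Y)` is a two-mark Poisson configuration of parameter `p` under `P`:
`X` is a Poisson point process of intensity `1` and `Y` is an independent `p`-thinning
of `X`.  Equivalently, `Y` (the doubly-marked points) and `X \ Y` (the singly-marked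
points) are independent Poisson point processes of respective intensities `p` and `1-p`. -/
def IsTwoMarkPoisson {Ω : Type} [MeasurableSpace Ω] (P : MeasureTheory.Measure Ω)
    (X Y : Ω → Set ℝ) (p : ℝ) : Prop :=
  (∀ ωs, Y ωs ⊆ X ωs) ∧
  IsPoissonPP P Y p ∧
  IsPoissonPP P (fun ωs => X ωs \ Y ωs) (1 - p) ∧
  (∀ (m : ℕ) (A : Fin m → Set ℝ), (∀ i, MeasurableSet (A i)) →
      Pairwise (Function.onFun Disjoint A) →
      ProbabilityTheory.iIndepFun
        (fun (k : Fin m × Bool) ωs =>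
          ptCount (if k.2 then Y ωs else X ωs \ Y ωs) (A k.1)) P)

/-- The model of the paper, under the Palm measure `ℙ¹`:
* `X` is a Poisson point process of intensity `1` on `ℝ`, conditioned (in the Palm sense)
  to have a point at the origin, and `Y ⊆ X` is an independent `p`-thinning of `X`;
  points of `Y` carry two marks and the remaining points of `X` carry one mark
  (field `marks x 0`).
* For every starting point `x ∈ X`, `S x` is the greedy walk started at `x`:
  `S x 0 = x`, the configuration evolves by `ω_{n+1} = ω_n - δ_{S_n}`, and `S x (n+1)`
  is (a.s.) the unique point `y ≠ S x n` carrying a mark in `ω_n` that is nearest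
  to `S x n`.
* `Sp`/`marksp` is the analogous greedy walk run on the configuration
  `ω⁺ = ω` restricted to `(0,∞)` plus a single mark `δ₀` at the origin. -/
structure GreedyModel where
  Ω : Type
  [mΩ : MeasurableSpace Ω]
  P : MeasureTheory.Measure Ω
  hprob : MeasureTheory.IsProbabilityMeasure P
  p : ℝ
  hp0 : 0 < p
  hp1 : p < 1
  X : Ω → Set ℝ
  Y : Ω → Set ℝ
  hYX : ∀ ωs, Y ωs ⊆ X ωs
  /-- Palm conditioning on `0 ∈ 𝒳`: there is a point at the origin. -/
  h0X : ∀ ωs, (0 : ℝ) ∈ X ωs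
  /-- The point at the origin carries two marks with probability `p`. -/
  h0Y : P {ωs | (0 : ℝ) ∈ Y ωs} = ENNReal.ofReal p
  /-- Away from the origin, the configuration is a two-mark Poisson process. -/
  hpoisson : IsTwoMarkPoisson P (fun ωs => X ωs \ {0}) (fun ωs => Y ωs \ {0}) p
  /-- The mark at the origin is independent of the rest of the configuration. -/
  hindep0 : ∀ (m : ℕ) (A : Fin m × Bool → Set ℝ), (∀ i, MeasurableSet (A i)) →
      ProbabilityTheory.IndepFun
        ({ωs | (0 : ℝ) ∈ Y ωs}.indicator fun _ => (1 : ℕ))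
        (fun ωs (k : Fin m × Bool) =>
          ptCount (if k.2 then Y ωs \ {0} else X ωs \ (Y ωs ∪ {0})) (A k)) P
  /-- The greedy walk started at `x` and the associated evolving mark configurations. -/
  S : ℝ → ℕ → Ω → ℝ
  marks : ℝ → ℕ → Ω → ℝ → ℕ
  /-- Initially, points of `Y` carry two marks, other points of `X` carry one. -/
  hmarks0 : ∀ x ωs z, marks x 0 ωs z = (X ωs).indicator 1 z + (Y ωs).indicator 1 z
  /-- `ω_{n+1} = ω_n - δ_{S_n}`. -/
  hmarksrec : ∀ x n ωs z,
      marks x (n + 1) ωs z = marks x n ωs z - ({S x n ωs} : Set ℝ).indicator 1 z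
  /-- The walk started at a point `x` of `X` starts at `x` itself. -/
  hS0 : ∀ ωs, ∀ x ∈ X ωs, S x 0 ωs = x
  hmeasS : ∀ x n, Measurable fun ωs => S x n ωs
  /-- Almost surely, for each starting point `x ∈ X`, the walk is well defined:
  `S x (n+1)` is a point distinct from `S x n`, still carrying a mark in `ω_n`, and
  strictly closer to `S x n` than any other such point. -/
  hwalk : ∀ᵐ ωs ∂P, ∀ x ∈ X ωs, ∀ n : ℕ,
      S x (n + 1) ωs ≠ S x n ωs ∧ 1 ≤ marks x n ωs (S x (n + 1) ωs) ∧
      ∀ z : ℝ, z ≠ S x n ωs → z ≠ S x (n + 1) ωs → 1 ≤ marks x n ωs z →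
        |S x (n + 1) ωs - S x n ωs| < |z - S x n ωs|
  /-- The greedy walk on `ω⁺`. -/
  Sp : ℕ → Ω → ℝ
  marksp : ℕ → Ω → ℝ → ℕ
  hmarksp0 : ∀ ωs z, marksp 0 ωs z =
      ({0} : Set ℝ).indicator 1 z +
        (Set.Ioi (0 : ℝ)).indicator
          (fun w => (X ωs).indicator 1 w + (Y ωs).indicator 1 w) z
  hmarksprec : ∀ n ωs z,
      marksp (n + 1) ωs z = marksp n ωs z - ({Sp n ωs} : Set ℝ).indicator 1 z
  hSp0 : ∀ ωs, Sp 0 ωs = 0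
  hmeasSp : ∀ n, Measurable fun ωs => Sp n ωs
  hwalkp : ∀ᵐ ωs ∂P, ∀ n : ℕ,
      Sp (n + 1) ωs ≠ Sp n ωs ∧ 1 ≤ marksp n ωs (Sp (n + 1) ωs) ∧
      ∀ z : ℝ, z ≠ Sp n ωs → z ≠ Sp (n + 1) ωs → 1 ≤ marksp n ωs z →
        |Sp (n + 1) ωs - Sp n ωs| < |z - Sp n ωs|

attribute [instance] GreedyModel.mΩ

/-- `T_A = inf {n ≥ 1 : S_n ∈ A}`, with value `∞` (in `ℕ∞`) if the walk never enters `A`. -/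
def hitTime (S : ℕ → ℝ) (A : Set ℝ) : ℕ∞ :=
  sInf ((fun n : ℕ => (n : ℕ∞)) '' {n : ℕ | 1 ≤ n ∧ S n ∈ A})

/-- The points `X₀ = 0 < X₁ < X₂ < ⋯` of the configuration `Xs` on `[0,∞)`:
`nthPoint Xs k` is `X_k`. -/
def nthPoint (Xs : Set ℝ) : ℕ → ℝ
  | 0 => 0
  | n + 1 => sInf (Xs ∩ Set.Ioi (nthPoint Xs n))

open Classical in
/-- The observable `𝓡_y` of the paper, for the walk `S` (with evolving marks `marks`)
and `y ∈ 𝒳 ∩ (0,∞)`.  It is `0` if `T_{ℝ₋} < T_y`; otherwise, labelling the set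
`𝒳_{T_y} ∩ [0,y]` of points still carrying a mark at time `T_y` as
`0 = z_n < ⋯ < z₁ < z₀ = y`, it is `max {y - z_j : y - z_j > 2 (y - z_{j-1})}`
(the predecessor `z_{j-1}` of a point `z_j` of the configuration being the `sInf` of the
part of the configuration strictly above `z_j`). -/
def RScript (marks : ℕ → ℝ → ℕ) (S : ℕ → ℝ) (y : ℝ) : ℝ :=
  if hitTime S (Set.Iio 0) < hitTime S {y} then 0
  else
    let Z : Set ℝ := {z : ℝ | 1 ≤ marks (hitTime S {y}).toNat z} ∩ Set.Icc 0 y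
    sSup {d : ℝ | ∃ z ∈ Z, d = y - z ∧ y - z > 2 * (y - sInf (Z ∩ Set.Ioi z))}


/-- The removal time `𝒯ᴿ_x = min {n ≥ 0 : ω⁺_{n+1}(x) = 0}` of the point `x` for the
greedy walk on `ω⁺` (with value `∞` if `x` is never cleared). -/
def TRtime (M : GreedyModel) (ωs : M.Ω) (x : ℝ) : ℕ∞ :=
  sInf ((fun n : ℕ => (n : ℕ∞)) '' {n : ℕ | M.marksp (n + 1) ωs x = 0})

/-- `ℓ(x) = max_{0 ≤ n ≤ 𝒯ᴿ_x} Sₙ - x`, the maximal displacement of the `ω⁺`-walk to the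
right of `x` up to the removal time of `x` (a junk value if `𝒯ᴿ_x = ∞`). -/
def ellReal (M : GreedyModel) (ωs : M.Ω) (x : ℝ) : ℝ :=
  sSup {d : ℝ | ∃ n : ℕ, n ≤ (TRtime M ωs x).toNat ∧ d = M.Sp n ωs - x}

/-- `ξ(x)`: the gap between `x + ℓ(x)` and the next point of `𝒳` strictly to its right. -/
def xiReal (M : GreedyModel) (ωs : M.Ω) (x : ℝ) : ℝ :=
  sInf (M.X ωs ∩ Set.Ioi (x + ellReal M ωs x)) - (x + ellReal M ωs x)

/-- `L(x) = ℓ(x) + ξ(x) ∈ [0,∞]`, with `L(x) = ∞` when `𝒯ᴿ_x = ∞`. -/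
def LGap (M : GreedyModel) (ωs : M.Ω) (x : ℝ) : ℝ≥0∞ :=
  if TRtime M ωs x < ⊤ then ENNReal.ofReal (ellReal M ωs x + xiReal M ωs x) else ⊤

/-- The renewal positions: `posSeq k = L₀ + L₁ + ⋯ + L_{k-1}` where `L₀ = L(0)` and
`L_{k+1} = L(L₀ + ⋯ + L_k)` (the recursion being stopped at the value `∞`). -/
def posSeq (M : GreedyModel) (ωs : M.Ω) : ℕ → ℝ≥0∞
  | 0 => 0
  | k + 1 =>
      if posSeq M ωs k < ⊤ then
        posSeq M ωs k + LGap M ωs (posSeq M ωs k).toReal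
      else ⊤

/-- The renewal lengths: `LSeq k = L_k = L(L₀ + ⋯ + L_{k-1})`. -/
def LSeq (M : GreedyModel) (ωs : M.Ω) (k : ℕ) : ℝ≥0∞ :=
  if posSeq M ωs k < ⊤ then LGap M ωs (posSeq M ωs k).toReal else ⊤


open Classical in
lemma aux_main (X Y : Set ℝ) (hYX : Y ⊆ X)
    (Sp : ℕ → ℝ) (mk : ℕ → ℝ → ℕ)
    (hm0 : ∀ z, mk 0 z = ({(0:ℝ)} : Set ℝ).indicator 1 z +
      (Set.Ioi (0:ℝ)).indicator (fun w => X.indicator 1 w + Y.indicator 1 w) z)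
    (hmrec : ∀ n z, mk (n+1) z = mk n z - ({Sp n} : Set ℝ).indicator 1 z)
    (hS0 : Sp 0 = 0)
    (hw : ∀ n, Sp (n+1) ≠ Sp n ∧ 1 ≤ mk n (Sp (n+1)) ∧ ∀ z, z ≠ Sp n → z ≠ Sp (n+1) →
      1 ≤ mk n z → |Sp (n+1) - Sp n| < |z - Sp n|)
    (hfin : ∀ t : ℝ, (X ∩ Set.Icc 0 t).Finite)
    (hub : ∀ t : ℝ, (X ∩ Set.Ioi t).Nonempty)
    (x : ℝ) (hx : x ∈ X) (hx0 : 0 ≤ x)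
    (T : ℕ) (hT1 : mk (T+1) x = 0) (hTmin : ∀ k, k < T → mk (k+1) x ≠ 0)
    (ℓ : ℝ) (n₀ : ℕ) (hn₀T : n₀ ≤ T) (hn₀ : Sp n₀ = x + ℓ)
    (hlmax : ∀ n, n ≤ T → Sp n ≤ x + ℓ) :
    ∃ m : ℕ, Sp m = x + (ℓ + (sInf (X ∩ Set.Ioi (x + ℓ)) - (x + ℓ))) ∧
      (∀ n, n < m → Sp n ≠ x + (ℓ + (sInf (X ∩ Set.Ioi (x + ℓ)) - (x + ℓ)))) ∧
      ∀ z ∈ Set.Ico x (x + (ℓ + (sInf (X ∩ Set.Ioi (x + ℓ)) - (x + ℓ)))), mk m z = 0 := by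
  -- basic mark lemmas
  have hmono : ∀ z (a b : ℕ), a ≤ b → mk b z ≤ mk a z := by
    intro z a b hab
    induction b, hab using Nat.le_induction with
    | base => exact le_refl _
    | succ n hn ih =>
        calc mk (n+1) z = mk n z - _ := hmrec n z
        _ ≤ mk n z := Nat.sub_le _ _
        _ ≤ mk a z := ih
  have hm0le2 : ∀ z, mk 0 z ≤ 2 := by
    intro z
    rw [hm0]
    by_cases h0 : z = (0:ℝ)
    · subst h0
      rw [Set.indicator_of_notMem (by simp : (0:ℝ) ∉ Set.Ioi 0)]
      simp
    · rw [Set.indicator_of_notMem (by simp [h0])]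
      by_cases h2 : z ∈ Set.Ioi (0:ℝ)
      · rw [Set.indicator_of_mem h2]
        have a1 : X.indicator (1:ℝ→ℕ) z ≤ 1 := by by_cases hX : z ∈ X <;> simp [hX]
        have a2 : Y.indicator (1:ℝ→ℕ) z ≤ 1 := by by_cases hY : z ∈ Y <;> simp [hY]
        simpa using add_le_add a1 a2
      · rw [Set.indicator_of_notMem h2]
        simp
  have hm0pos : ∀ z, 0 < z → z ∈ X → 1 ≤ mk 0 z := by
    intro z hz hzX
    rw [hm0, Set.indicator_of_mem (Set.mem_Ioi.mpr hz)]
    show 1 ≤ ({0}:Set ℝ).indicator 1 z + (X.indicator 1 z + Y.indicator 1 z)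
    rw [Set.indicator_of_mem hzX, Pi.one_apply]
    omega
  have hsupp : ∀ n z, 1 ≤ mk n z → z = 0 ∨ (0 < z ∧ z ∈ X) := by
    intro n z h
    have h0 : 1 ≤ mk 0 z := le_trans h (hmono z 0 n (Nat.zero_le n))
    by_contra hc
    push_neg at hc
    obtain ⟨hz0, hzX⟩ := hc
    rw [hm0] at h0
    rw [Set.indicator_of_notMem (by simpa using hz0)] at h0
    by_cases hzpos : 0 < z
    · rw [Set.indicator_of_mem (by simpa using hzpos)] at h0
      have : z ∉ X := hzX hzpos
      rw [Set.indicator_of_notMem this, Set.indicator_of_notMem (fun hz => this (hYX hz))] at h0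
      simp at h0
    · rw [Set.indicator_of_notMem (by simpa using hzpos)] at h0
      simp at h0
  have hvisit : ∀ n z, Sp n = z → mk (n+1) z = mk n z - 1 := by
    intro n z h
    rw [hmrec, Set.indicator_of_mem (by simp [h])]
    rfl
  have hnonvisit : ∀ n z, Sp n ≠ z → mk (n+1) z = mk n z := by
    intro n z h
    rw [hmrec, Set.indicator_of_notMem (fun hz => h (Set.mem_singleton_iff.mp hz).symm)]
    simp
  have hnovisit : ∀ n z, (∀ j, j < n → Sp j ≠ z) → mk n z = mk 0 z := by
    intro n
    induction n with
    | zero => intro z _; rfl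
    | succ k ih =>
        intro z h
        rw [hnonvisit k z (h k (Nat.lt_succ_self k))]
        exact ih z (fun j hj => h j (Nat.lt_succ_of_lt hj))
  have hjump : ∀ n z, 1 ≤ mk n z →
      ((Sp n < z ∧ z < Sp (n+1)) ∨ (Sp (n+1) < z ∧ z < Sp n)) → False := by
    intro n z hmk hcase
    have h3 := (hw n).2.2 z
    rcases hcase with ⟨h1, h2⟩ | ⟨h1, h2⟩
    · have := h3 (ne_of_gt h1) (ne_of_lt h2) hmk
      rw [abs_of_pos (by linarith), abs_of_pos (by linarith)] at this
      linarith
    · have := h3 (ne_of_lt h2) (ne_of_gt h1) hmk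
      rw [abs_of_neg (by linarith), abs_of_neg (by linarith)] at this
      linarith
  have htouch_up : ∀ (a b : ℕ) (z : ℝ), a ≤ b → 1 ≤ mk b z → Sp a < z → z < Sp b →
      ∃ c, a < c ∧ c < b ∧ Sp c = z := by
    intro a b z hab hmk ha hb
    set P : ℕ → Prop := fun k => a ≤ k ∧ Sp k < z with hP
    set c := Nat.findGreatest P b with hc
    have hPc : P c := Nat.findGreatest_spec hab ⟨le_refl a, ha⟩
    have hcb : c ≤ b := Nat.findGreatest_le b
    have hcb' : c < b := lt_of_le_of_ne hcb (fun e => absurd hPc (by rw [e]; exact fun h => absurd hb (not_lt_of_gt h.2)))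
    have hnext : z ≤ Sp (c+1) := by
      by_contra hlt
      push_neg at hlt
      exact Nat.findGreatest_is_greatest (Nat.lt_succ_self c) (Nat.succ_le_of_lt hcb')
        ⟨le_trans hPc.1 (Nat.le_succ c), hlt⟩
    rcases eq_or_lt_of_le hnext with heq | hlt
    · refine ⟨c+1, Nat.lt_succ_of_le hPc.1, ?_, heq.symm⟩
      rcases eq_or_lt_of_le (Nat.succ_le_of_lt hcb') with e | h
      · exact absurd hb (by rw [← e, ← heq]; exact lt_irrefl z)
      · exact h
    · exact absurd (hjump c z (le_trans hmk (hmono z c b hcb)) (Or.inl ⟨hPc.2, hlt⟩)) not_false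
  have htouch_down : ∀ (a b : ℕ) (z : ℝ), a ≤ b → 1 ≤ mk b z → z < Sp a → Sp b < z →
      ∃ c, a < c ∧ c < b ∧ Sp c = z := by
    intro a b z hab hmk ha hb
    set P : ℕ → Prop := fun k => a ≤ k ∧ z < Sp k with hP
    set c := Nat.findGreatest P b with hc
    have hPc : P c := Nat.findGreatest_spec hab ⟨le_refl a, ha⟩
    have hcb : c ≤ b := Nat.findGreatest_le b
    have hcb' : c < b := lt_of_le_of_ne hcb (fun e => absurd hPc (by rw [e]; exact fun h => absurd hb (not_lt_of_gt h.2)))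
    have hnext : Sp (c+1) ≤ z := by
      by_contra hlt
      push_neg at hlt
      exact Nat.findGreatest_is_greatest (Nat.lt_succ_self c) (Nat.succ_le_of_lt hcb')
        ⟨le_trans hPc.1 (Nat.le_succ c), hlt⟩
    rcases eq_or_lt_of_le hnext with heq | hlt
    · refine ⟨c+1, Nat.lt_succ_of_le hPc.1, ?_, heq⟩
      rcases eq_or_lt_of_le (Nat.succ_le_of_lt hcb') with e | h
      · exact absurd hb (by rw [← e, heq]; exact lt_irrefl z)
      · exact h
    · exact absurd (hjump c z (le_trans hmk (hmono z c b hcb)) (Or.inr ⟨hlt, hPc.2⟩)) not_false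
  have hdrop : ∀ (c n : ℕ) (z : ℝ), c < n → Sp c = z → 1 ≤ mk n z → mk n z + 1 ≤ mk c z := by
    intro c n z hcn hSc hmk
    have h1 : mk n z ≤ mk (c+1) z := hmono z (c+1) n hcn
    have h2 : mk (c+1) z = mk c z - 1 := hvisit c z hSc
    omega
  
  -- Sp T = x and basic facts about T
  have hmkTx : 1 ≤ mk T x := by
    rcases Nat.eq_zero_or_pos T with h0 | hpos
    · subst h0
      rcases eq_or_lt_of_le hx0 with he | hlt
      · rw [hm0, ← he]
        rw [Set.indicator_of_notMem (by simp : (0:ℝ) ∉ Set.Ioi 0)]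
        simp
      · exact hm0pos x hlt hx
    · obtain ⟨k, rfl⟩ := Nat.exists_eq_succ_of_ne_zero (Nat.pos_iff_ne_zero.mp hpos)
      exact Nat.one_le_iff_ne_zero.mpr (hTmin k (Nat.lt_succ_self k))
  have hSpT : Sp T = x := by
    by_contra hne
    rw [hnonvisit T x hne] at hT1
    omega
  have hl0 : 0 ≤ ℓ := by
    have := hlmax T (le_refl T)
    rw [hSpT] at this; linarith
  -- r : the next point of X strictly beyond x + ℓ
  obtain ⟨t₀, ht₀⟩ := hub (x + ℓ)
  have ht₀X : t₀ ∈ X := ht₀.1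
  have ht₀gt : x + ℓ < t₀ := ht₀.2
  have hG'fin : (X ∩ Set.Ioc (x + ℓ) t₀).Finite := by
    apply (hfin t₀).subset
    rintro y ⟨hyX, hy1, hy2⟩
    exact ⟨hyX, by constructor <;> [linarith; linarith]⟩
  have hG'ne : (X ∩ Set.Ioc (x + ℓ) t₀).Nonempty := ⟨t₀, ht₀X, ht₀gt, le_refl t₀⟩
  obtain ⟨r, hrG', hrmin⟩ := Set.exists_min_image _ id hG'fin hG'ne
  have hrleast : IsLeast (X ∩ Set.Ioi (x + ℓ)) r := by
    constructor
    · exact ⟨hrG'.1, hrG'.2.1⟩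
    · rintro y ⟨hyX, hygt⟩
      by_cases hy : y ≤ t₀
      · exact hrmin y ⟨hyX, hygt, hy⟩
      · push_neg at hy
        exact le_trans (hrmin t₀ ⟨ht₀X, ht₀gt, le_refl t₀⟩) (le_of_lt hy)
  have hrinf : sInf (X ∩ Set.Ioi (x + ℓ)) = r := hrleast.csInf_eq
  have hrX : r ∈ X := hrleast.1.1
  have hrgt : x + ℓ < r := hrleast.1.2
  have hgap : ∀ y, y ∈ X → x + ℓ < y → r ≤ y := fun y h1 h2 => hrleast.2 ⟨h1, h2⟩
  have hrpos : 0 < r := by linarith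
  have hkey : x + (ℓ + (sInf (X ∩ Set.Ioi (x + ℓ)) - (x + ℓ))) = r := by rw [hrinf]; ring
  rw [hkey]
  -- before visiting r, the walk stays ≤ x + ℓ
  have hmk0r : 1 ≤ mk 0 r := hm0pos r hrpos hrX
  have hA : ∀ n, (∀ j, j ≤ n → Sp j ≠ r) → Sp n ≤ x + ℓ := by
    intro n
    induction n with
    | zero => intro _; rw [hS0]; linarith
    | succ k ih =>
        intro h
        have hk : Sp k ≤ x + ℓ := ih (fun j hj => h j (Nat.le_succ_of_le hj))
        by_contra hgt
        push_neg at hgt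
        have hmarked : 1 ≤ mk k (Sp (k+1)) := (hw k).2.1
        have hsupp' := hsupp k _ hmarked
        have hSkX : Sp (k+1) ∈ X := by
          rcases hsupp' with h0 | ⟨_, hX⟩
          · exfalso; rw [h0] at hgt; linarith
          · exact hX
        have hge : r ≤ Sp (k+1) := hgap _ hSkX (by linarith)
        have hlt : r < Sp (k+1) := lt_of_le_of_ne hge (fun e => h (k+1) (le_refl _) e.symm)
        have hmkr : 1 ≤ mk k r := by
          rw [hnovisit k r (fun j hj => h j (le_of_lt (Nat.lt_succ_of_lt hj)))]
          exact hmk0r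
        exact hjump k r hmkr (Or.inl ⟨by linarith, hlt⟩)
  -- the walk visits r
  have hSpmem : ∀ n, Sp n = 0 ∨ (0 < Sp n ∧ Sp n ∈ X) := by
    intro n
    cases n with
    | zero => exact Or.inl hS0
    | succ k => exact hsupp k _ (hw k).2.1
  have hhit : ∃ n, Sp n = r := by
    by_contra hno
    push_neg at hno
    have hball : ∀ n, Sp n ≤ x + ℓ := fun n => hA n (fun j _ => hno j)
    have hFfin : (insert (0:ℝ) (X ∩ Set.Icc 0 (x + ℓ))).Finite := (hfin (x + ℓ)).insert 0
    have hmem : ∀ n, Sp n ∈ insert (0:ℝ) (X ∩ Set.Icc 0 (x + ℓ)) := by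
      intro n
      rcases hSpmem n with h0 | ⟨hpos, hX⟩
      · exact Or.inl h0
      · exact Or.inr ⟨hX, le_of_lt hpos, hball n⟩
    haveI : Finite (insert (0:ℝ) (X ∩ Set.Icc 0 (x + ℓ)) : Set ℝ) := hFfin.to_subtype
    obtain ⟨y, hy⟩ := Finite.exists_infinite_fiber (fun n : ℕ => (⟨Sp n, hmem n⟩ :
      (insert (0:ℝ) (X ∩ Set.Icc 0 (x + ℓ)) : Set ℝ)))
    have hyinf : {n : ℕ | Sp n = (y : ℝ)}.Infinite := by
      refine (Set.infinite_coe_iff.mp hy).mono ?_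
      intro n hn
      have : (⟨Sp n, hmem n⟩ : (insert (0:ℝ) (X ∩ Set.Icc 0 (x + ℓ)) : Set ℝ)) = y := hn
      exact congrArg Subtype.val this
    obtain ⟨c1, hc1⟩ := hyinf.nonempty
    obtain ⟨c2, hc2, hc12⟩ := hyinf.exists_gt c1
    obtain ⟨c3, hc3, hc23⟩ := hyinf.exists_gt c2
    obtain ⟨c4, hc4, hc34⟩ := hyinf.exists_gt c3
    have hc4pos : 1 ≤ c4 := by omega
    have hSc4 : Sp c4 = (y:ℝ) := hc4
    obtain ⟨k, rfl⟩ := Nat.exists_eq_succ_of_ne_zero (by omega : c4 ≠ 0)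
    have hmk4 : 1 ≤ mk (k+1) (y : ℝ) := by
      have h1 : 1 ≤ mk k (Sp (k+1)) := (hw k).2.1
      have hne : Sp k ≠ (y:ℝ) := fun e => (hw k).1 (hSc4.trans e.symm)
      rw [hnonvisit k _ hne, ← hSc4]
      exact h1
    have h3 : mk (k+1) (y:ℝ) + 1 ≤ mk c3 (y:ℝ) := hdrop c3 (k+1) _ hc34 hc3 hmk4
    have h2 : mk c3 (y:ℝ) + 1 ≤ mk c2 (y:ℝ) := hdrop c2 c3 _ hc23 hc2 (by omega)
    have h1 : mk c2 (y:ℝ) + 1 ≤ mk c1 (y:ℝ) := hdrop c1 c2 _ hc12 hc1 (by omega)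
    have h0 : mk c1 (y:ℝ) ≤ 2 := le_trans (hmono _ 0 c1 (Nat.zero_le _)) (hm0le2 _)
    omega
  -- m : first hitting time of r
  set Hset : Set ℕ := {n | Sp n = r} with hHset
  have hHne : Hset.Nonempty := hhit
  set m := sInf Hset with hm
  have hSm : Sp m = r := Nat.sInf_mem hHne
  have hmmin : ∀ n, n < m → Sp n ≠ r := fun n hn => Nat.notMem_of_lt_sInf hn
  have hmpos : 0 < m := by
    rcases Nat.eq_zero_or_pos m with h0 | h; swap; exact h
    exfalso; rw [h0, hS0] at hSm; linarith
  clear_value m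
  obtain ⟨m', rfl⟩ : ∃ m'', m = m'' + 1 := ⟨m - 1, by omega⟩
  have hTm : T < m' + 1 := by
    by_contra hle
    push_neg at hle
    have := hlmax (m'+1) (by omega)
    rw [hSm] at this; linarith
  have hTm' : T ≤ m' := by omega
  have hs_le : Sp m' ≤ x + ℓ := hA m' (fun j hj => hmmin j (by omega))
  refine ⟨m' + 1, hSm, hmmin, ?_⟩
  -- the clearing claim
  rintro z ⟨hzx, hzr⟩
  by_contra hmz
  have hmz : 1 ≤ mk (m'+1) z := Nat.one_le_iff_ne_zero.mpr hmz
  have hzxne : z ≠ x := by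
    intro e
    subst e
    have : mk (m'+1) z ≤ mk (T+1) z := hmono z (T+1) (m'+1) (by omega)
    omega
  have hzgtx : x < z := lt_of_le_of_ne hzx (Ne.symm hzxne)
  have hzX : z ∈ X := by
    rcases hsupp (m'+1) z hmz with h0 | ⟨_, hX⟩
    · exfalso; rw [h0] at hzgtx; linarith
    · exact hX
  have hzle : z ≤ x + ℓ := by
    by_contra hgt
    push_neg at hgt
    exact absurd (hgap z hzX hgt) (not_le_of_gt hzr)
  have hsr : Sp m' < r := by linarith
  by_cases hzs : z = Sp m'
  · -- z is the point the walk jumps from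
    have h1 : mk (m'+1) z = mk m' z - 1 := hvisit m' z hzs.symm
    have h2 : 2 ≤ mk m' z := by omega
    -- find an earlier visit c < m'
    have hexc : ∃ c, c < m' ∧ Sp c = z := by
      rcases eq_or_lt_of_le hzle with he | hlt
      · -- z = x + ℓ : the visit at n₀
        refine ⟨n₀, ?_, by rw [hn₀, he]⟩
        rcases eq_or_lt_of_le hTm' with heT | h
        · -- if n₀ = m' then n₀ = T = m' hence z = x, contradiction
          rcases eq_or_lt_of_le (le_trans hn₀T hTm') with he2 | h2'
          · exfalso
            have : Sp n₀ = x := by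
              have : n₀ = T := by omega
              rw [this, hSpT]
            rw [hn₀, ← he] at this
            exact hzxne (by linarith)
          · exact h2'
        · rcases eq_or_lt_of_le (le_trans hn₀T hTm') with he2 | h2'
          · exfalso
            have hn₀T' : n₀ = T := by omega
            have : Sp n₀ = x := by rw [hn₀T', hSpT]
            rw [hn₀, ← he] at this
            exact hzxne (by linarith)
          · exact h2'
      · -- z < x + ℓ : touch between 0 and n₀
        have hn₀pos : 0 ≤ n₀ := Nat.zero_le _
        obtain ⟨c, hc0, hcn₀, hcz⟩ := htouch_up 0 n₀ z (Nat.zero_le _)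
          (le_trans hmz (hmono z n₀ (m'+1) (by omega))) (by rw [hS0]; linarith)
          (by rw [hn₀]; exact hlt)
        exact ⟨c, by omega, hcz⟩
    obtain ⟨c, hcm', hcz⟩ := hexc
    have := hdrop c m' z hcm' hcz (by omega)
    have h0 : mk c z ≤ 2 := le_trans (hmono _ 0 c (Nat.zero_le _)) (hm0le2 _)
    omega
  · -- z ≠ Sp m' : use the greedy condition at step m'
    have hmzm' : 1 ≤ mk m' z := le_trans hmz (hmono z m' (m'+1) (Nat.le_succ _))
    have hgr := (hw m').2.2 z hzs (by rw [hSm]; exact ne_of_lt hzr) hmzm'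
    rw [hSm] at hgr
    rw [abs_of_pos (by linarith)] at hgr
    rcases lt_or_gt_of_ne hzs with hzlt | hzgt
    · -- z < Sp m' : three earlier touches
      have hzltxl : z < x + ℓ := lt_of_lt_of_le hzlt hs_le
      have hn₀T2 : n₀ < T := by
        rcases eq_or_lt_of_le hn₀T with he | h
        · exfalso
          have : Sp n₀ = x := by rw [he, hSpT]
          rw [hn₀] at this
          have : ℓ = 0 := by linarith
          rw [this] at hzltxl
          linarith
        · exact h
      obtain ⟨c1, hc10, hc1n₀, hc1z⟩ := htouch_up 0 n₀ z (Nat.zero_le _)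
        (le_trans hmz (hmono z n₀ (m'+1) (by omega))) (by rw [hS0]; linarith)
        (by rw [hn₀]; exact hzltxl)
      obtain ⟨c2, hc2a, hc2b, hc2z⟩ := htouch_down n₀ T z (le_of_lt hn₀T2)
        (le_trans hmz (hmono z T (m'+1) (by omega))) (by rw [hn₀]; exact hzltxl)
        (by rw [hSpT]; exact hzgtx)
      obtain ⟨c3, hc3a, hc3b, hc3z⟩ := htouch_up T m' z hTm'
        hmzm' (by rw [hSpT]; exact hzgtx) hzlt
      have h3 : mk (m'+1) z + 1 ≤ mk c3 z := hdrop c3 (m'+1) z (by omega) hc3z hmz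
      have h2 : mk c3 z + 1 ≤ mk c2 z := hdrop c2 c3 z (by omega) hc2z (by omega)
      have h1 : mk c2 z + 1 ≤ mk c1 z := hdrop c1 c2 z (by omega) hc1z (by omega)
      have h0 : mk c1 z ≤ 2 := le_trans (hmono _ 0 c1 (Nat.zero_le _)) (hm0le2 _)
      omega
    · -- z > Sp m' : direct contradiction with the greedy choice
      rw [abs_of_pos (by linarith)] at hgr
      linarith

lemma poisson_unbounded {Ω : Type} [MeasurableSpace Ω] {P : MeasureTheory.Measure Ω}
    {N : Ω → Set ℝ} {c : ℝ} (hc : 0 < c) (h : IsPoissonPP P N c) :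
    ∀ᵐ ωs ∂P, ∀ K : ℕ, (N ωs ∩ Set.Ioi (K:ℝ)).Nonempty := by
  have hK : ∀ K : ℕ, P {ωs | ¬ (N ωs ∩ Set.Ioi (K:ℝ)).Nonempty} = 0 := by
    intro K
    have hb : ∀ n : ℕ, P {ωs | ¬ (N ωs ∩ Set.Ioi (K:ℝ)).Nonempty} ≤
        ENNReal.ofReal (Real.exp (-c) ^ (n+1)) := by
      intro n
      set A : Set ℝ := Set.Ioc (K:ℝ) (K + (n+1)) with hA
      have hmA : MeasurableSet A := measurableSet_Ioc
      have hvol : MeasureTheory.volume A = ENNReal.ofReal ((n:ℝ)+1) := by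
        rw [hA, Real.volume_Ioc]
        norm_num
      have hvolne : MeasureTheory.volume A ≠ ⊤ := by rw [hvol]; exact ENNReal.ofReal_ne_top
      have hform := h.2.2.1 A hmA hvolne 0
      have htoReal : (MeasureTheory.volume A).toReal = (n:ℝ)+1 := by
        rw [hvol, ENNReal.toReal_ofReal (by positivity)]
      rw [htoReal] at hform
      have hexp : Real.exp (-(c * ((n:ℝ)+1))) * (c * ((n:ℝ)+1)) ^ (0:ℕ) / (Nat.factorial 0) =
          Real.exp (-c) ^ (n+1) := by
        rw [pow_zero, Nat.factorial_zero]
        have : -(c * ((n:ℝ)+1)) = ((n+1 : ℕ) : ℝ) * (-c) := by push_cast; ring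
        rw [this, Real.exp_nat_mul]
        norm_num
      calc P {ωs | ¬ (N ωs ∩ Set.Ioi (K:ℝ)).Nonempty}
          ≤ P {ωs | ptCount (N ωs) A = 0} := by
            apply MeasureTheory.measure_mono
            intro ωs hωs
            have hωs2 : N ωs ∩ Set.Ioi (K:ℝ) = ∅ := Set.not_nonempty_iff_eq_empty.mp hωs
            have hemp : N ωs ∩ A = ∅ := by
              apply Set.eq_empty_of_subset_empty
              rw [← hωs2]
              exact Set.inter_subset_inter_right _ (fun y hy => hy.1)
            show ptCount (N ωs) A = 0
            unfold ptCount
            rw [hemp]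
            exact Set.ncard_empty _
        _ = ENNReal.ofReal (Real.exp (-c) ^ (n+1)) := by rw [hform, hexp]
    have ht : Filter.Tendsto (fun n : ℕ => ENNReal.ofReal (Real.exp (-c) ^ (n+1)))
        Filter.atTop (nhds (ENNReal.ofReal 0)) := by
      apply ENNReal.tendsto_ofReal
      have hbase : Filter.Tendsto (fun n : ℕ => Real.exp (-c) ^ n) Filter.atTop (nhds 0) :=
        tendsto_pow_atTop_nhds_zero_of_lt_one (le_of_lt (Real.exp_pos _))
          (Real.exp_lt_one_iff.mpr (by linarith))
      exact hbase.comp (Filter.tendsto_add_atTop_nat 1)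
    rw [ENNReal.ofReal_zero] at ht
    exact le_antisymm (ge_of_tendsto' ht hb) zero_le
  rw [MeasureTheory.ae_iff]
  have hsub : {ωs | ¬ ∀ K : ℕ, (N ωs ∩ Set.Ioi (K:ℝ)).Nonempty} ⊆
      ⋃ K : ℕ, {ωs | ¬ (N ωs ∩ Set.Ioi (K:ℝ)).Nonempty} := by
    intro ωs hωs
    simp only [Set.mem_setOf_eq, not_forall] at hωs
    obtain ⟨K, hKω⟩ := hωs
    exact Set.mem_iUnion.mpr ⟨K, hKω⟩
  exact MeasureTheory.measure_mono_null hsub (MeasureTheory.measure_iUnion_null hK)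

/-- `ℙ¹`-almost surely, for every `x ∈ 𝒳 ∩ [0,∞)` with `𝒯ᴿ_x < ∞`, at the first time the
greedy walk on `ω⁺` hits the point `x + L(x)`, no marks remain in `[x, x + L(x))`. -/
theorem renewal_block_completely_cleared (M : GreedyModel) :
    ∀ᵐ ωs ∂M.P, ∀ x ∈ M.X ωs, 0 ≤ x → TRtime M ωs x < ⊤ →
      ∃ m : ℕ, M.Sp m ωs = x + (ellReal M ωs x + xiReal M ωs x) ∧
        (∀ n < m, M.Sp n ωs ≠ x + (ellReal M ωs x + xiReal M ωs x)) ∧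
        ∀ z ∈ Set.Ico x (x + (ellReal M ωs x + xiReal M ωs x)), M.marksp m ωs z = 0 := by
  have hc : (0:ℝ) < 1 - M.p := by linarith [M.hp1]
  filter_upwards [M.hwalkp, M.hpoisson.2.1.1, M.hpoisson.2.2.1.1,
    poisson_unbounded hc M.hpoisson.2.2.1] with ωs hwalk hfinY hfinXY hunb
  intro x hx hx0 hTR
  -- local finiteness of X on [0, t]
  have hfin : ∀ t : ℝ, (M.X ωs ∩ Set.Icc 0 t).Finite := by
    intro t
    have h1 := hfinY |t|
    have h2 := hfinXY |t|
    apply Set.Finite.subset ((h1.union h2).insert 0)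
    rintro y ⟨hyX, hy0, hyt⟩
    by_cases hy : y = 0
    · exact Set.mem_insert_iff.mpr (Or.inl hy)
    · apply Set.mem_insert_iff.mpr
      right
      have hyI : y ∈ Set.Icc (-|t|) |t| :=
        ⟨le_trans (neg_nonpos_of_nonneg (abs_nonneg t)) hy0, le_trans hyt (le_abs_self t)⟩
      by_cases hyY : y ∈ M.Y ωs \ {0}
      · exact Or.inl ⟨hyY, hyI⟩
      · exact Or.inr ⟨⟨⟨hyX, hy⟩, hyY⟩, hyI⟩
  -- unboundedness of X to the right
  have hub : ∀ t : ℝ, (M.X ωs ∩ Set.Ioi t).Nonempty := by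
    intro t
    obtain ⟨y, hy1, hy2⟩ := hunb (Nat.ceil (max t 0))
    refine ⟨y, hy1.1.1, ?_⟩
    have ht : t ≤ ((Nat.ceil (max t 0) : ℕ) : ℝ) :=
      le_trans (le_max_left t 0) (Nat.le_ceil _)
    exact lt_of_le_of_lt ht hy2
  -- the removal time as a natural number
  have hSne : {n : ℕ | M.marksp (n+1) ωs x = 0}.Nonempty := by
    by_contra hempty
    rw [Set.not_nonempty_iff_eq_empty] at hempty
    have : TRtime M ωs x = ⊤ := by
      unfold TRtime
      rw [hempty]
      simp
    rw [this] at hTR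
    exact absurd hTR (lt_irrefl ⊤)
  set T := sInf {n : ℕ | M.marksp (n+1) ωs x = 0} with hT
  have hTmem : M.marksp (T+1) ωs x = 0 := Nat.sInf_mem hSne
  have hTmin : ∀ k, k < T → M.marksp (k+1) ωs x ≠ 0 := by
    intro k hk heq
    rw [hT] at hk
    exact Nat.notMem_of_lt_sInf (s := {n : ℕ | M.marksp (n+1) ωs x = 0}) hk heq
  have hTR' : TRtime M ωs x = (T : ℕ∞) := by
    apply le_antisymm
    · exact sInf_le ⟨T, hTmem, rfl⟩
    · apply le_sInf
      rintro b ⟨n, hn, rfl⟩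
      show (T : ℕ∞) ≤ (n : ℕ∞)
      have h2 := Nat.sInf_le hn
      rw [← hT] at h2
      exact_mod_cast h2
  have htoNat : (TRtime M ωs x).toNat = T := by rw [hTR']; exact ENat.toNat_coe T
  -- the maximal displacement ℓ
  have hellset : {d : ℝ | ∃ n : ℕ, n ≤ (TRtime M ωs x).toNat ∧ d = M.Sp n ωs - x} =
      (fun n : ℕ => M.Sp n ωs - x) '' (Set.Iic T) := by
    rw [htoNat]
    ext d
    simp only [Set.mem_setOf_eq, Set.mem_image, Set.mem_Iic]
    constructor
    · rintro ⟨n, hn, rfl⟩; exact ⟨n, hn, rfl⟩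
    · rintro ⟨n, hn, rfl⟩; exact ⟨n, hn, rfl⟩
  have hellfin : {d : ℝ | ∃ n : ℕ, n ≤ (TRtime M ωs x).toNat ∧ d = M.Sp n ωs - x}.Finite := by
    rw [hellset]; exact (Set.finite_Iic T).image _
  have hellne : {d : ℝ | ∃ n : ℕ, n ≤ (TRtime M ωs x).toNat ∧ d = M.Sp n ωs - x}.Nonempty :=
    ⟨M.Sp 0 ωs - x, 0, Nat.zero_le _, rfl⟩
  have hellmem := Set.Nonempty.csSup_mem hellne hellfin
  obtain ⟨n₀, hn₀T, hn₀⟩ : ∃ n, n ≤ T ∧ ellReal M ωs x = M.Sp n ωs - x := by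
    obtain ⟨n, hn, he⟩ := hellmem
    exact ⟨n, by rw [← htoNat]; exact hn, he⟩
  have hlmax : ∀ n, n ≤ T → M.Sp n ωs ≤ x + ellReal M ωs x := by
    intro n hn
    have hmem : M.Sp n ωs - x ∈ {d : ℝ | ∃ n : ℕ, n ≤ (TRtime M ωs x).toNat ∧ d = M.Sp n ωs - x} :=
      ⟨n, by rw [htoNat]; exact hn, rfl⟩
    have := le_csSup hellfin.bddAbove hmem
    have h2 : M.Sp n ωs - x ≤ ellReal M ωs x := this
    linarith
  -- apply the deterministic lemma
  have haux := aux_main (M.X ωs) (M.Y ωs) (M.hYX ωs) (fun n => M.Sp n ωs)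
    (fun n z => M.marksp n ωs z) (M.hmarksp0 ωs) (fun n z => M.hmarksprec n ωs z)
    (M.hSp0 ωs) hwalk hfin hub x hx hx0 T hTmem hTmin
    (ellReal M ωs x) n₀ hn₀T (by rw [hn₀]; ring) hlmax
  have hxi : xiReal M ωs x =
      sInf (M.X ωs ∩ Set.Ioi (x + ellReal M ωs x)) - (x + ellReal M ωs x) := rfl
  rw [hxi]
  exact haux


end
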